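/- Let X be a countable Fréchet topological space without isolated points. Then the ideal nwd(X) of nowhere dense subsets of X is tame. -/

import Mathlib

open Set Filter Topology TopologicalSpace

/-- A set `C` is an (infinite) sequence converging to `p`: it is infinite and
almost contained in every neighborhood of `p`. -/
def IsConvSeqTo {X : Type*} [TopologicalSpace X] (C : Set X) (p : X) : Prop :=
  C.Infinite ∧ ∀ U ∈ nhds p, (C \ U).Finite

/-- A space is non-discrete if some point is not isolated. -/
def NonDiscrete (X : Type*) [TopologicalSpace X] : Prop :=
  ∃ x : X, ¬ IsOpen ({x} : Set X)

/-- An ideal of subsets: closed under subsets and finite unions, and containing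
all finite sets. -/
def IsIdeal {α : Type*} (I : Set (Set α)) : Prop :=
  (∀ A B : Set α, A ⊆ B → B ∈ I → A ∈ I) ∧
  (∀ A ∈ I, ∀ B ∈ I, A ∪ B ∈ I) ∧
  (∀ A : Set α, A.Finite → A ∈ I)

/-- A family `I` is ω-hitting if for every countable family of infinite sets
there is a member of `I` meeting each of them in an infinite set. -/
def OmegaHitting {α : Type*} (I : Set (Set α)) : Prop :=
  ∀ Y : ℕ → Set α, (∀ n, (Y n).Infinite) → ∃ A ∈ I, ∀ n, (Y n ∩ A).Infinite

/-- An ideal `I` on `α` is tame if for every `I`-positive set `Y`, every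
`f : Y → ω` and every ω-hitting ideal `J` on `ω` there is `j ∈ J` whose
`f`-preimage (inside `Y`) is `I`-positive. -/
def Tame {α : Type*} (I : Set (Set α)) : Prop :=
  ∀ Y : Set α, Y ∉ I → ∀ f : α → ℕ, ∀ J : Set (Set ℕ),
    IsIdeal J → OmegaHitting J → ∃ j ∈ J, Y ∩ f ⁻¹' j ∉ I

/-- `Y` is entangled if for every point `x`, the ideal
`I_x ↾ Y = {A ⊆ Y : x ∉ closure A}` is ω-hitting (on `Y`). -/
def Entangled {X : Type*} [TopologicalSpace X] (Y : Set X) : Prop :=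
  ∀ x : X, ∀ Z : ℕ → Set X, (∀ n, Z n ⊆ Y ∧ (Z n).Infinite) →
    ∃ A : Set X, A ⊆ Y ∧ x ∉ closure A ∧ ∀ n, (Z n ∩ A).Infinite

/-- A space is groomed if it contains no dense entangled subset. -/
def Groomed (X : Type*) [TopologicalSpace X] : Prop :=
  ¬ ∃ D : Set X, Dense D ∧ Entangled D

/-- An ideal on a group is invariant if it is closed under left and right
translations and under inversion. -/
def InvariantIdeal {G : Type*} [Group G] (I : Set (Set G)) : Prop :=
  ∀ A ∈ I, ∀ g : G,
    (fun h => g * h) '' A ∈ I ∧ (fun h => h * g) '' A ∈ I ∧ (fun h => h⁻¹) '' A ∈ I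

/-- An ideal on a topological group is weakly closed if for every set `A` and
every sequence `C` converging to the identity,
`A ∈ I ↔ A ∪ {x : C·x ⊆* A} ∈ I`. -/
def WeaklyClosed {G : Type*} [Group G] [TopologicalSpace G] (I : Set (Set G)) : Prop :=
  ∀ A C : Set G, IsConvSeqTo C 1 →
    (A ∈ I ↔ A ∪ {x : G | ((fun c => c * x) '' C \ A).Finite} ∈ I)

/-- Alternative (1) of IIA: a countable subfamily of `I` capturing (meeting
infinitely) every infinite convergent sequence. -/
def CapturesConvSeqs {G : Type*} [TopologicalSpace G] (I : Set (Set G)) : Prop :=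
  ∃ S : Set (Set G), S.Countable ∧ S ⊆ I ∧
    ∀ C : Set G, ∀ p : G, IsConvSeqTo C p → ∃ A ∈ S, (C ∩ A).Infinite

/-- Alternative (2) of IIA: a countable family of `I`-positive sets which is an
almost π-network: every non-empty open set contains one of them modulo `I`. -/
def HasAlmostPiNetwork {G : Type*} [TopologicalSpace G] (I : Set (Set G)) : Prop :=
  ∃ H : Set (Set G), H.Countable ∧ (∀ A ∈ H, A ∉ I) ∧
    ∀ U : Set G, IsOpen U → U.Nonempty → ∃ A ∈ H, A \ U ∈ I

/-- The Invariant Ideal Axiom: for every countable groomed topological group `G`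
and every tame, weakly closed, invariant ideal on `G`, one of the two
alternatives holds. -/
def IIA : Prop :=
  ∀ (G : Type) [Group G] [TopologicalSpace G] [IsTopologicalGroup G] [T1Space G]
    [Countable G], Groomed G →
    ∀ I : Set (Set G), IsIdeal I → Tame I → WeaklyClosed I → InvariantIdeal I →
      CapturesConvSeqs I ∨ HasAlmostPiNetwork I

/-- A set is scattered if every nonempty subset has a point isolated in it. -/
def IsScattered {X : Type*} [TopologicalSpace X] (A : Set X) : Prop :=
  ∀ B ⊆ A, B.Nonempty → ∃ x ∈ B, ∃ U : Set X, IsOpen U ∧ U ∩ B = {x}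

/-- A set is closed discrete if it is closed and discrete as a subspace. -/
def IsClosedDiscrete {X : Type*} [TopologicalSpace X] (D : Set X) : Prop :=
  IsClosed D ∧ ∀ x ∈ D, ∃ U : Set X, IsOpen U ∧ U ∩ D = {x}

/-- The ideal of nowhere dense subsets of `X`. -/
def nwdIdeal (X : Type*) [TopologicalSpace X] : Set (Set X) :=
  {A | IsNowhereDense A}

/-- The ideal generated by the compact subsets of `X`. -/
def cptIdeal (X : Type*) [TopologicalSpace X] : Set (Set X) :=
  {A | ∃ F : Set (Set X), F.Finite ∧ (∀ K ∈ F, IsCompact K) ∧ A ⊆ ⋃₀ F}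

/-- The ideal generated by the closed scattered subsets of `X`. -/
def csctIdeal (X : Type*) [TopologicalSpace X] : Set (Set X) :=
  {A | ∃ F : Set (Set X), F.Finite ∧ (∀ K ∈ F, IsClosed K ∧ IsScattered K) ∧ A ⊆ ⋃₀ F}

/-- A set is countably compact: every countable open cover has a finite subcover. -/
def IsCountablyCompactNat {X : Type*} [TopologicalSpace X] (K : Set X) : Prop :=
  ∀ U : ℕ → Set X, (∀ n, IsOpen (U n)) → K ⊆ ⋃ n, U n →
    ∃ t : Finset ℕ, K ⊆ ⋃ n ∈ t, U n

/-- A `kω`-space: the topology is determined by a countable family of compact sets. -/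
def IsKOmega (X : Type*) [TopologicalSpace X] : Prop :=
  ∃ K : ℕ → Set X, (∀ n, IsCompact (K n)) ∧
    ∀ U : Set X, IsOpen U ↔ ∀ n, ∃ V : Set X, IsOpen V ∧ U ∩ K n = V ∩ K n

/-- A `cω`-space: the topology is determined by a countable family of countably
compact sets. -/
def IsCOmega (X : Type*) [TopologicalSpace X] : Prop :=
  ∃ K : ℕ → Set X, (∀ n, IsCountablyCompactNat (K n)) ∧
    ∀ U : Set X, IsOpen U ↔ ∀ n, ∃ V : Set X, IsOpen V ∧ U ∩ K n = V ∩ K n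

/-- A set is dense in itself if it has no points isolated in its subspace topology. -/
def DenseInItself {X : Type*} [TopologicalSpace X] (A : Set X) : Prop :=
  ∀ x ∈ A, x ∈ closure (A \ {x})

/-- A strict vD-network at `x`: a countable family of infinite closed discrete
sets, almost contained in every open neighborhood of `x` member-wise. -/
def StrictVDNetwork {X : Type*} [TopologicalSpace X] (D : Set (Set X)) (x : X) : Prop :=
  D.Countable ∧ (∀ E ∈ D, E.Infinite ∧ IsClosedDiscrete E) ∧
    ∀ U : Set X, IsOpen U → x ∈ U → ∃ E ∈ D, (E \ U).Finite

/-- A relation `R ⊆ G × G` is large if for all `a b`, `(a,b) ∈ R` or `(a, a·b⁻¹) ∈ R`. -/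
def IsLargeRel {G : Type*} [Group G] (R : Set (G × G)) : Prop :=
  ∀ a b : G, (a, b) ∈ R ∨ (a, a * b⁻¹) ∈ R

/-- `R⁻¹[B] = {a : (a,b) ∈ R for some b ∈ B}`. -/
def relPreimage {G : Type*} (R : Set (G × G)) (B : Set G) : Set G :=
  {a | ∃ b ∈ B, (a, b) ∈ R}

section Aux

variable {X : Type*} [TopologicalSpace X]

/-- Removing a nowhere dense set from a set dense in an open set keeps it dense there. -/
lemma aux_denseIn_diff_nwd {U D N : Set X} (hU : IsOpen U)
    (hD : U ⊆ closure D) (hN : IsNowhereDense N) : U ⊆ closure (D \ N) := by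
  intro x hx
  rw [mem_closure_iff]
  intro o ho hxo
  have h1 : ¬ (o ∩ U ⊆ closure N) := by
    intro h
    have h2 : o ∩ U ⊆ interior (closure N) :=
      (IsOpen.subset_interior_iff (ho.inter hU)).mpr h
    rw [hN] at h2
    exact h2 ⟨hxo, hx⟩
  obtain ⟨y, hy, hyN⟩ := Set.not_subset.mp h1
  have hyD : y ∈ closure D := hD hy.2
  rw [mem_closure_iff] at hyD
  obtain ⟨z, hz, hzD⟩ := hyD (o ∩ (closure N)ᶜ) (ho.inter isClosed_closure.isOpen_compl)
    ⟨hy.1, hyN⟩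
  exact ⟨z, hz.1, hzD, fun hzN => hz.2 (subset_closure hzN)⟩

/-- In a T1 space without isolated points, a point of an open set is in the closure
of any set dense in that open set, even after removing the point itself. -/
lemma aux_mem_closure_diff_singleton [T1Space X] {U D : Set X} (hU : IsOpen U)
    (hD : U ⊆ closure D) {x : X} (hx : x ∈ U) (hiso : ¬ IsOpen ({x} : Set X)) :
    x ∈ closure (D \ {x}) := by
  by_contra h
  rw [mem_closure_iff] at h
  push_neg at h
  obtain ⟨o, ho, hxo, hdisj⟩ := h
  have key : o ∩ U = {x} := by
    apply Set.Subset.antisymm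
    · intro y hy
      by_contra hyx
      have hyD : y ∈ closure D := hD hy.2
      rw [mem_closure_iff] at hyD
      obtain ⟨z, hz, hzD⟩ := hyD (o \ {x}) (ho.sdiff isClosed_singleton) ⟨hy.1, hyx⟩
      have hmem : z ∈ o ∩ (D \ {x}) := ⟨hz.1, hzD, hz.2⟩
      rw [hdisj] at hmem
      exact hmem
    · intro y hy
      rw [Set.mem_singleton_iff] at hy
      subst hy
      exact ⟨hxo, hx⟩
  exact hiso (key ▸ ho.inter hU)

/-- From Fréchet-Urysohn + T1: a point in the closure of a set not containing it is
the limit of an infinite subset of the set. -/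
lemma aux_exists_convSet [T1Space X] [FrechetUrysohnSpace X] {s : Set X} {x : X}
    (hx : x ∈ closure s) (hxs : x ∉ s) :
    ∃ C : Set X, C ⊆ s ∧ C.Infinite ∧ ∀ V ∈ nhds x, (C \ V).Finite := by
  obtain ⟨u, hus, hu⟩ := mem_closure_iff_seq_limit.mp hx
  have hcl : x ∈ closure (Set.range u) := by
    rw [mem_closure_iff]
    intro o ho hxo
    have he : ∀ᶠ n in Filter.atTop, u n ∈ o := hu (ho.mem_nhds hxo)
    obtain ⟨n, hn⟩ := he.exists
    exact ⟨u n, hn, Set.mem_range_self n⟩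
  refine ⟨Set.range u, Set.range_subset_iff.mpr hus, ?_, ?_⟩
  · intro hfin
    rw [hfin.isClosed.closure_eq] at hcl
    obtain ⟨n, rfl⟩ := hcl
    exact hxs (hus n)
  · intro V hV
    have he : ∀ᶠ n in Filter.atTop, u n ∈ V := hu hV
    obtain ⟨N, hN⟩ := Filter.eventually_atTop.mp he
    have hsub : Set.range u \ V ⊆ u '' (Set.Iio N) := by
      rintro y ⟨⟨n, rfl⟩, hyV⟩
      refine ⟨n, ?_, rfl⟩
      by_contra hn
      exact hyV (hN n (not_lt.mp hn))
    exact ((Set.finite_Iio N).image u).subset hsub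

/-- An infinite set almost contained in every neighborhood of `x` has `x` in its closure. -/
lemma aux_infinite_conv_mem_closure {C : Set X} {x : X}
    (hC : C.Infinite) (h : ∀ V ∈ nhds x, (C \ V).Finite) : x ∈ closure C := by
  rw [mem_closure_iff]
  intro o ho hxo
  by_contra hne
  rw [Set.not_nonempty_iff_eq_empty] at hne
  have : C ⊆ C \ o := fun y hy => ⟨hy, fun hyo =>
    (Set.eq_empty_iff_forall_notMem.mp hne y) ⟨hyo, hy⟩⟩
  exact (h o (ho.mem_nhds hxo)).subset this |>.not_infinite hC

/-- Per-point lemma: assuming all finite-fiber preimages are nowhere dense, every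
point of an open set inside `closure Y` admits an infinite `K ⊆ ℕ` such that any `j`
meeting `K` infinitely often puts the point into `closure (Y ∩ f⁻¹ j)`. -/
lemma aux_perpoint [T1Space X] [FrechetUrysohnSpace X]
    (hiso : ∀ x : X, ¬ IsOpen ({x} : Set X))
    {Y : Set X} {f : X → ℕ} {U : Set X} (hU : IsOpen U) (hUY : U ⊆ closure Y)
    (hfib : ∀ F : Set ℕ, F.Finite → IsNowhereDense (Y ∩ f ⁻¹' F))
    {x : X} (hx : x ∈ U) :
    ∃ K : Set ℕ, K.Infinite ∧
      ∀ j : Set ℕ, (j ∩ K).Infinite → x ∈ closure (Y ∩ f ⁻¹' j) := by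
  classical
  by_cases hK₁ : {k : ℕ | x ∈ closure (Y ∩ f ⁻¹' {k})}.Infinite
  · refine ⟨_, hK₁, fun j hj => ?_⟩
    obtain ⟨k, hkj, hkK⟩ := hj.nonempty
    refine closure_mono ?_ hkK
    rintro y ⟨hy, hfy⟩
    exact ⟨hy, by rw [Set.mem_preimage, Set.mem_singleton_iff] at hfy; simp [hfy, hkj]⟩
  · rw [Set.not_infinite] at hK₁
    set K₁ : Set ℕ := {k : ℕ | x ∈ closure (Y ∩ f ⁻¹' {k})} with hK₁def
    have hD : U ⊆ closure (Y \ (Y ∩ f ⁻¹' K₁)) :=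
      aux_denseIn_diff_nwd hU hUY (hfib K₁ hK₁)
    have hx' : x ∈ closure ((Y \ (Y ∩ f ⁻¹' K₁)) \ {x}) :=
      aux_mem_closure_diff_singleton hU hD hx (hiso x)
    obtain ⟨C, hCs, hCinf, hCconv⟩ := aux_exists_convSet hx' (fun h => h.2 rfl)
    have hCY : C ⊆ Y := fun y hy => (hCs hy).1.1
    have hCK₁ : ∀ y ∈ C, f y ∉ K₁ := fun y hy hk => (hCs hy).1.2 ⟨(hCs hy).1.1, hk⟩
    -- every fiber of f on C is finite
    have hfibC : ∀ k : ℕ, (C ∩ f ⁻¹' {k}).Finite := by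
      intro k
      by_contra hinf'
      have hinf : (C ∩ f ⁻¹' {k}).Infinite := hinf'
      have hconv' : ∀ V ∈ nhds x, ((C ∩ f ⁻¹' {k}) \ V).Finite := by
        intro V hV
        refine (hCconv V hV).subset ?_
        intro y hy
        exact ⟨hy.1.1, hy.2⟩
      have hcl : x ∈ closure (C ∩ f ⁻¹' {k}) :=
        aux_infinite_conv_mem_closure hinf hconv'
      have hss : C ∩ f ⁻¹' {k} ⊆ Y ∩ f ⁻¹' {k} := fun y hy => ⟨hCY hy.1, hy.2⟩
      have hkK₁ : k ∈ K₁ := closure_mono hss hcl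
      obtain ⟨y, hy⟩ := hinf.nonempty
      have hfy : f y = k := hy.2
      exact hCK₁ y hy.1 (hfy ▸ hkK₁)
    refine ⟨f '' C, ?_, ?_⟩
    · intro hfin
      have : C.Finite := by
        have hsub : C ⊆ ⋃ k ∈ f '' C, C ∩ f ⁻¹' {k} := by
          intro y hy
          exact Set.mem_biUnion (Set.mem_image_of_mem f hy) ⟨hy, rfl⟩
        exact (hfin.biUnion (fun k _ => hfibC k)).subset hsub
      exact this.not_infinite hCinf
    · intro j hj
      have hinf : (C ∩ f ⁻¹' j).Infinite := by
        intro hfin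
        have himg : (j ∩ f '' C).Finite := by
          refine (hfin.image f).subset ?_
          rintro k ⟨hkj, y, hyC, rfl⟩
          exact ⟨y, ⟨hyC, hkj⟩, rfl⟩
        exact himg.not_infinite hj
      have hconv' : ∀ V ∈ nhds x, ((C ∩ f ⁻¹' j) \ V).Finite := by
        intro V hV
        refine (hCconv V hV).subset ?_
        intro y hy
        exact ⟨hy.1.1, hy.2⟩
      have hcl : x ∈ closure (C ∩ f ⁻¹' j) :=
        aux_infinite_conv_mem_closure hinf hconv'
      have hss : C ∩ f ⁻¹' j ⊆ Y ∩ f ⁻¹' j := fun y hy => ⟨hCY hy.1, hy.2⟩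
      exact closure_mono hss hcl

end Aux

/-- In a countable Fréchet space without isolated points, the
ideal of nowhere dense sets is tame. -/
theorem statement2 (X : Type*) [TopologicalSpace X] [T1Space X] [Countable X]
    [FrechetUrysohnSpace X] (hiso : ∀ x : X, ¬ IsOpen ({x} : Set X)) :
    Tame (nwdIdeal X) := by
  intro Y hY f J hJ hJhit
  obtain ⟨hJdown, hJun, hJfin⟩ := hJ
  by_cases hF : ∃ F : Set ℕ, F.Finite ∧ Y ∩ f ⁻¹' F ∉ nwdIdeal X
  · obtain ⟨F, hFfin, hFpos⟩ := hF
    exact ⟨F, hJfin F hFfin, hFpos⟩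
  · push_neg at hF
    have hfib : ∀ F : Set ℕ, F.Finite → IsNowhereDense (Y ∩ f ⁻¹' F) := by
      intro F hFfin
      exact hF F hFfin
    have hYn : ¬ IsNowhereDense Y := hY
    have hUne : (interior (closure Y)).Nonempty := by
      rw [Set.nonempty_iff_ne_empty]
      exact hYn
    set U := interior (closure Y) with hUdef
    have hU : IsOpen U := isOpen_interior
    have hUY : U ⊆ closure Y := interior_subset
    have hperp : ∀ x : U, ∃ K : Set ℕ, K.Infinite ∧
        ∀ j : Set ℕ, (j ∩ K).Infinite → (x : X) ∈ closure (Y ∩ f ⁻¹' j) :=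
      fun x => aux_perpoint hiso hU hUY hfib x.2
    choose K hKinf hKprop using hperp
    have : Nonempty U := ⟨⟨hUne.choose, hUne.choose_spec⟩⟩
    obtain ⟨g, hg⟩ := exists_surjective_nat U
    obtain ⟨j, hjJ, hjhit⟩ := hJhit (fun n => K (g n)) (fun n => hKinf (g n))
    refine ⟨j, hjJ, ?_⟩
    intro hnwd
    have hsub : U ⊆ closure (Y ∩ f ⁻¹' j) := by
      intro x hx
      obtain ⟨n, hn⟩ := hg ⟨x, hx⟩
      have := hKprop (g n) j (by rw [Set.inter_comm]; exact hjhit n)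
      rwa [hn] at this
    have hUint : U ⊆ interior (closure (Y ∩ f ⁻¹' j)) :=
      interior_maximal hsub hU
    have hne : (interior (closure (Y ∩ f ⁻¹' j))).Nonempty :=
      hUne.mono hUint
    have : IsNowhereDense (Y ∩ f ⁻¹' j) := hnwd
    rw [this] at hne
    exact Set.not_nonempty_empty hne
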